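/- arXiv:cs/0410050 — 2 statements merged into one kernel-verified Lean document; each statement's English description precedes it below -/
import Mathlib

section
/- Let ℛ be a (not necessarily synchronous) system in which the agent has perfect recall, let U be a run-based event, and let (r,m) be a point with Pr(ℛ(K(r,m))) > 0 and Pr(ℛ(K(r,m+1))) > 0. Define K(r,m+1)^{(r,m)} = {(r',k) ∈ K(r,m) : r' ∈ ℛ(K(r,m+1))}. Then the HT probabilities update by conditioning: Pr^HT_{(r,m+1)}(U) = Pr(ℛ(U) ∩ ℛ(K(r,m+1)^{(r,m)})) / Pr(ℛ(K(r,m+1)^{(r,m)})), i.e., Pr^HT_{(r,m+1)}(U) equals the conditional probability, with respect to Pr^HT_{(r,m)}, of U given the set of points in K(r,m) lying on runs the agent still considers possible at (r,m+1). -/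
open scoped Classical

namespace SBP

variable {L : Type*}

/-- A point: a run together with a time. -/
abbrev Point (L : Type*) := (ℕ → L) × ℕ

/-- The information set `K(r,m)`: all points `(r',m')` with `r' ∈ ℛ` and `r' m' = r m`. -/
def K (ℛ : Finset (ℕ → L)) (r : ℕ → L) (m : ℕ) : Set (Point L) :=
  {p | p.1 ∈ ℛ ∧ p.1 p.2 = r m}

/-- `ℛ(U)`: the runs of `ℛ` passing through some point of `U`. -/
noncomputable def runsOf (ℛ : Finset (ℕ → L)) (U : Set (Point L)) : Finset (ℕ → L) :=
  ℛ.filter fun r' => ∃ m', (r', m') ∈ U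

/-- A system is synchronous if indistinguishable points occur at the same time. -/
def Synchronous (ℛ : Finset (ℕ → L)) : Prop :=
  ∀ r ∈ ℛ, ∀ r' ∈ ℛ, ∀ m m' : ℕ, r m = r' m' → m = m'

/-- The local-state sequence of run `r` at time `m`:
`r 0, r 1, …, r m` with consecutive repetitions removed. -/
noncomputable def lseq (r : ℕ → L) (m : ℕ) : List L :=
  ((List.range (m + 1)).map r).destutter (· ≠ ·)

/-- Perfect recall: indistinguishable points have the same local-state sequence. -/
def PerfectRecall (ℛ : Finset (ℕ → L)) : Prop :=
  ∀ r ∈ ℛ, ∀ r' ∈ ℛ, ∀ m m' : ℕ, r m = r' m' → lseq r m = lseq r' m'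

/-- A run-based event: contains all points of a run or none of them. -/
def RunBased (U : Set (Point L)) : Prop :=
  ∀ (r' : ℕ → L) (k k' : ℕ), (r', k) ∈ U → (r', k') ∈ U

/-- The probability of a (finite) set of runs. -/
noncomputable def PrS (pr : (ℕ → L) → ℝ) (S : Finset (ℕ → L)) : ℝ := ∑ r ∈ S, pr r

/-- `n_{(r,m)}(r')`: the number of points of the information set `K(r,m)` lying on run `r'`. -/
noncomputable def npts (r : ℕ → L) (m : ℕ) (r' : ℕ → L) : ℕ :=
  Nat.card {k : ℕ | r' k = r m}

/-- The Elga probability of a single point, for the agent at the point `(r,m)`. -/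
noncomputable def elga (ℛ : Finset (ℕ → L)) (pr : (ℕ → L) → ℝ) (r : ℕ → L) (m : ℕ)
    (p : Point L) : ℝ :=
  if p ∈ K ℛ r m then
    pr p.1 / ∑ r'' ∈ runsOf ℛ (K ℛ r m), pr r'' * (npts r m r'' : ℝ)
  else 0

/-- `K(r,m+1)^{(r,m)}`: the points of `K(r,m)` lying on runs the agent still
considers possible at `(r,m+1)`. -/
def Ksup (ℛ : Finset (ℕ → L)) (r : ℕ → L) (m : ℕ) : Set (Point L) :=
  {p ∈ K ℛ r m | p.1 ∈ runsOf ℛ (K ℛ r (m + 1))}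

/-- The HT probability at `(r,m)` of a run-based event `U`:
`Pr^HT_{(r,m)}(U) = Pr(ℛ(U) ∩ ℛ(K(r,m))) / Pr(ℛ(K(r,m)))`. -/
noncomputable def prHT (ℛ : Finset (ℕ → L)) (pr : (ℕ → L) → ℝ) (r : ℕ → L) (m : ℕ)
    (U : Set (Point L)) : ℝ :=
  PrS pr (runsOf ℛ U ∩ runsOf ℛ (K ℛ r m)) / PrS pr (runsOf ℛ (K ℛ r m))


lemma mem_destutter'_ne {L : Type*} :
    ∀ (l : List L) (a x : L), x ∈ a :: l → x ∈ l.destutter' (· ≠ ·) a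
  | [], a, x, hx => by simpa using hx
  | b :: l, a, x, hx => by
    rw [List.destutter']
    by_cases hab : a ≠ b
    · simp only [if_pos hab, List.mem_cons]
      rcases List.mem_cons.1 hx with h | h
      · exact Or.inl h
      · exact Or.inr (mem_destutter'_ne l b x h)
    · rw [if_neg hab]
      push_neg at hab
      subst hab
      rcases List.mem_cons.1 hx with h | h
      · exact mem_destutter'_ne l a x (by simp [h])
      · rcases List.mem_cons.1 h with h | h
        · exact mem_destutter'_ne l a x (by simp [h])
        · exact mem_destutter'_ne l a x (by simp [h])

lemma mem_destutter_ne {L : Type*} (l : List L) (x : L) (hx : x ∈ l) :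
    x ∈ l.destutter (· ≠ ·) := by
  cases l with
  | nil => simp at hx
  | cons a l => exact mem_destutter'_ne l a x hx

lemma mem_lseq {L : Type*} (r : ℕ → L) (m k : ℕ) (hk : k ≤ m) : r k ∈ lseq r m :=
  mem_destutter_ne _ _ (List.mem_map.2 ⟨k, List.mem_range.2 (by omega), rfl⟩)

lemma lseq_mem_range {L : Type*} (r : ℕ → L) (m : ℕ) (x : L) (hx : x ∈ lseq r m) :
    ∃ k, r k = x := by
  have := (List.destutter_sublist (· ≠ ·) ((List.range (m + 1)).map r)).mem hx
  rcases List.mem_map.1 this with ⟨k, _, hkx⟩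
  exact ⟨k, hkx⟩

lemma runsOf_Ksup {L : Type*} (ℛ : Finset (ℕ → L)) (hrec : PerfectRecall ℛ)
    (r : ℕ → L) (hr : r ∈ ℛ) (m : ℕ) :
    runsOf ℛ (Ksup ℛ r m) = runsOf ℛ (K ℛ r (m + 1)) := by
  ext r'
  simp only [runsOf, Finset.mem_filter]
  constructor
  · rintro ⟨hR, k, ⟨hK, hrun⟩⟩
    refine ⟨hR, ?_⟩
    have : r' ∈ Finset.filter (fun r'' => ∃ m', (r'', m') ∈ K ℛ r (m + 1)) ℛ := hrun
    exact (Finset.mem_filter.1 this).2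
  · rintro ⟨hR, k, hK, hk⟩
    have hls : lseq r' k = lseq r (m + 1) := hrec r' hR r hr k (m + 1) hk
    have hmem : r m ∈ lseq r' k := by
      rw [hls]; exact mem_lseq r (m + 1) m (Nat.le_succ m)
    obtain ⟨k', hk'⟩ := lseq_mem_range r' k (r m) hmem
    refine ⟨hR, k', ⟨⟨hR, hk'⟩, ?_⟩⟩
    exact Finset.mem_filter.2 ⟨hR, k, hK, hk⟩

/-- In a (not necessarily synchronous) system with perfect recall, the HT probabilities
update by conditioning: `Pr^HT_{(r,m+1)}(U)` equals the conditional probability of `U`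
given `K(r,m+1)^{(r,m)}`, for every run-based event `U`. -/
theorem update_by_conditioning_HT (ℛ : Finset (ℕ → L)) (hne : ℛ.Nonempty)
    (hrec : PerfectRecall ℛ)
    (pr : (ℕ → L) → ℝ) (hnn : ∀ r' ∈ ℛ, 0 ≤ pr r') (hsum : ∑ r' ∈ ℛ, pr r' = 1)
    (U : Set (Point L)) (hU : RunBased U)
    (r : ℕ → L) (hr : r ∈ ℛ) (m : ℕ)
    (h1 : 0 < PrS pr (runsOf ℛ (K ℛ r m)))
    (h2 : 0 < PrS pr (runsOf ℛ (K ℛ r (m + 1)))) :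
    prHT ℛ pr r (m + 1) U =
      PrS pr (runsOf ℛ U ∩ runsOf ℛ (Ksup ℛ r m)) / PrS pr (runsOf ℛ (Ksup ℛ r m)) := by
  rw [prHT, runsOf_Ksup ℛ hrec r hr m]

end SBP
end

section
/- In a synchronous system in which the agent has perfect recall, for every point (r,m) the two candidate conditioning sets coincide: K(r,m+1)^{(r,m)} = K(r,m+1)⁻, where K(r,m+1)⁻ = {(r',k) : (r',k+1) ∈ K(r,m+1)} and K(r,m+1)^{(r,m)} = {(r',k) ∈ K(r,m) : r' ∈ ℛ(K(r,m+1))}. -/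
open scoped Classical

namespace SBP

variable {L : Type*}

/-- `K⁻`: the set of points immediately preceding the points of `K ℛ r m`. -/
def Kminus (ℛ : Finset (ℕ → L)) (r : ℕ → L) (m : ℕ) : Set (Point L) :=
  {p | (p.1, p.2 + 1) ∈ K ℛ r m}

lemma destutter'_getLast? (l : List L) (b : L) :
    (l.destutter' (· ≠ ·) b).getLast? = (b :: l).getLast? := by
  induction l generalizing b with
  | nil => simp [List.destutter'_nil]
  | cons c l ih =>
    by_cases h : b ≠ c
    · rw [List.destutter'_cons_pos _ h]
      rw [List.getLast?_cons_cons]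
      rw [show (b :: (l.destutter' (· ≠ ·) c)).getLast? = (l.destutter' (· ≠ ·) c).getLast? from ?_, ih]
      cases hD : l.destutter' (· ≠ ·) c with
      | nil => exact absurd hD (List.destutter'_ne_nil l _)
      | cons d D => simp
    · rw [List.destutter'_cons_neg _ h, ih]
      push_neg at h
      subst h
      cases l <;> simp

lemma destutter_getLast? (l : List L) :
    (l.destutter (· ≠ ·)).getLast? = l.getLast? := by
  cases l with
  | nil => rfl
  | cons b l => rw [List.destutter_cons', destutter'_getLast?]

lemma destutter'_concat (l : List L) (b a x : L)
    (hx : (l.destutter' (· ≠ ·) b).getLast? = some x) :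
    (l ++ [a]).destutter' (· ≠ ·) b =
      if x ≠ a then l.destutter' (· ≠ ·) b ++ [a] else l.destutter' (· ≠ ·) b := by
  induction l generalizing b with
  | nil =>
    simp only [List.destutter'_nil, List.getLast?_singleton, Option.some.injEq] at hx
    rw [List.nil_append, List.destutter'_singleton, List.destutter'_nil]
    have hbx : b = x := by simpa using hx
    subst hbx
    by_cases h : b ≠ a <;> simp [h]
  | cons c l ih =>
    by_cases h : b ≠ c
    · rw [List.destutter'_cons_pos _ h] at hx ⊢
      rw [List.cons_append, List.destutter'_cons_pos _ h]
      have hne : l.destutter' (· ≠ ·) c ≠ [] := List.destutter'_ne_nil l _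
      have hx' : (l.destutter' (· ≠ ·) c).getLast? = some x := by
        cases hD : l.destutter' (· ≠ ·) c with
        | nil => exact absurd hD hne
        | cons d D => rw [hD] at hx; simpa using hx
      rw [ih c hx']
      by_cases hxa : x ≠ a <;> simp [hxa]
    · rw [List.destutter'_cons_neg _ h] at hx ⊢
      rw [List.cons_append, List.destutter'_cons_neg _ h]
      exact ih b hx

lemma lseq_getLast? (r : ℕ → L) (m : ℕ) : (lseq r m).getLast? = some (r m) := by
  rw [lseq, destutter_getLast?, List.range_succ, List.map_append]
  simp

lemma lseq_ne_nil (r : ℕ → L) (m : ℕ) : lseq r m ≠ [] := by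
  intro h
  have := lseq_getLast? r m
  rw [h] at this
  simp at this

lemma lseq_succ (r : ℕ → L) (m : ℕ) :
    lseq r (m + 1) = if r m ≠ r (m + 1) then lseq r m ++ [r (m + 1)] else lseq r m := by
  have hlast : ((List.range (m + 1)).map r).getLast? = some (r m) := by
    rw [List.range_succ, List.map_append]; simp
  unfold lseq
  rw [show m + 1 + 1 = (m + 1) + 1 from rfl, List.range_succ, List.map_append, List.map_singleton]
  cases hl : (List.range (m + 1)).map r with
  | nil => simp [hl] at hlast
  | cons b l =>
    rw [hl] at hlast
    rw [List.cons_append, List.destutter_cons', List.destutter_cons']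
    have hx : (l.destutter' (· ≠ ·) b).getLast? = some (r m) := by
      rw [destutter'_getLast?]; exact hlast
    exact destutter'_concat l b (r (m + 1)) (r m) hx

lemma lseq_mem (r : ℕ → L) (m : ℕ) (a : L) (ha : a ∈ lseq r m) :
    ∃ j ≤ m, r j = a := by
  have hsub : List.Sublist (lseq r m) ((List.range (m + 1)).map r) := by
    unfold lseq; exact List.destutter_sublist (R := (· ≠ ·)) _
  have := hsub.subset ha
  rw [List.mem_map] at this
  obtain ⟨j, hj, hja⟩ := this
  rw [List.mem_range] at hj
  exact ⟨j, Nat.lt_succ_iff.mp hj, hja⟩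

lemma lseq_last_mem (r : ℕ → L) (m : ℕ) : r m ∈ lseq r m := by
  have h : r m ∈ (lseq r m).getLast? := by rw [lseq_getLast?]; rfl
  obtain ⟨hne, he⟩ := List.mem_getLast?_eq_getLast h
  rw [he]
  exact List.getLast_mem hne

/-- Key lemma: under synchrony and perfect recall, agreement at time `m+1`
implies agreement at time `m`. -/
lemma prev_agree {ℛ : Finset (ℕ → L)} (hsync : Synchronous ℛ) (hrec : PerfectRecall ℛ)
    {r r' : ℕ → L} (hr : r ∈ ℛ) (hr' : r' ∈ ℛ) {m : ℕ}
    (h : r' (m + 1) = r (m + 1)) : r' m = r m := by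
  have hls : lseq r (m + 1) = lseq r' (m + 1) :=
    hrec r hr r' hr' (m + 1) (m + 1) h.symm
  rw [lseq_succ r m, lseq_succ r' m] at hls
  by_cases h1 : r m ≠ r (m + 1) <;> by_cases h2 : r' m ≠ r' (m + 1)
  · -- both strict: cancel the last elements
    rw [if_pos h1, if_pos h2, h] at hls
    have : lseq r m = lseq r' m := by
      have := List.append_inj_left' hls rfl
      exact this
    have hl := lseq_getLast? r m
    rw [this, lseq_getLast? r' m] at hl
    exact (Option.some.injEq _ _).mp hl
  · push_neg at h2
    rw [if_pos h1, if_neg (by simp [h2])] at hls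
    -- lseq r m ++ [r (m+1)] = lseq r' m
    have hmem : r m ∈ lseq r' m := by
      rw [← hls]; exact List.mem_append_left _ (lseq_last_mem r m)
    obtain ⟨j, hj, hja⟩ := lseq_mem r' m _ hmem
    have hjm : j = m := hsync r' hr' r hr j m hja
    exact hjm ▸ hja
  · push_neg at h1
    rw [if_neg (not_not.mpr h1), if_pos h2] at hls
    -- lseq r m = lseq r' m ++ [r' (m+1)]
    have hmem : r' m ∈ lseq r m := by
      rw [hls]; exact List.mem_append_left _ (lseq_last_mem r' m)
    obtain ⟨j, hj, hja⟩ := lseq_mem r m _ hmem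
    have hjm : j = m := hsync r hr r' hr' j m hja
    exact (hjm ▸ hja).symm
  · push_neg at h1 h2
    rw [h2, h, h1]

/-- In a synchronous system with perfect recall, the two candidate conditioning sets
coincide: `K(r,m+1)^{(r,m)} = K(r,m+1)⁻`. -/
theorem Ksup_eq_Kminus (ℛ : Finset (ℕ → L)) (hne : ℛ.Nonempty)
    (hsync : Synchronous ℛ) (hrec : PerfectRecall ℛ)
    (r : ℕ → L) (hr : r ∈ ℛ) (m : ℕ) :
    Ksup ℛ r m = Kminus ℛ r (m + 1) := by
  ext ⟨r', k⟩
  simp only [Ksup, Kminus, K, runsOf, Set.mem_setOf_eq, Finset.mem_filter]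
  constructor
  · rintro ⟨⟨hr', hk⟩, -, m', hrm', hm'⟩
    have hkm : k = m := hsync r' hr' r hr k m hk
    have hm1 : m' = m + 1 := hsync r' hr' r hr m' (m + 1) hm'
    subst hkm; subst hm1
    exact ⟨hr', hm'⟩
  · rintro ⟨hr', h1⟩
    have hk1 : k + 1 = m + 1 := hsync r' hr' r hr (k + 1) (m + 1) h1
    have hkm : k = m := Nat.succ_injective hk1
    have h1' : r' (m + 1) = r (m + 1) := hkm ▸ h1
    refine ⟨⟨hr', ?_⟩, hr', ⟨m + 1, hr', h1'⟩⟩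
    rw [hkm]
    exact prev_agree hsync hrec hr hr' h1'

end SBP
end
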